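/- Let 0 < r < 1, let ξ_k be a sequence with c⁻¹ < ξ_k < c for some c > 1, and suppose doubly-indexed positive reals ξ_{k,n} satisfy |ξ_k − ξ_{k,n}| ≤ C r^{n−k} for all n ≥ k ≥ k₀ (C a constant). Then for each fixed i, the products ∏_{j=1}^{n−i} (ξ_{k+j,k+n}/ξ_{k+j}) satisfy: limsup and liminf over n of the logarithm of the product differ by at most 2C' rⁱ for a constant C' independent of k and i, uniformly in k ≥ k₀. -/

import Mathlib

open Filter Finset

lemma aux_abs_log {x δ : ℝ} (hx : 0 < x) (h : |x - 1| ≤ δ) (hδ : δ ≤ 1/2) :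
    |Real.log x| ≤ 2 * δ := by
  have h1 : Real.log x ≤ x - 1 := Real.log_le_sub_one_of_pos hx
  have hab := abs_le.mp h
  have hδ0 : 0 ≤ δ := le_trans (abs_nonneg _) h
  have hxl : 1/2 ≤ x := by linarith [hab.1]
  have h2 : Real.log x⁻¹ ≤ x⁻¹ - 1 := Real.log_le_sub_one_of_pos (inv_pos.mpr hx)
  rw [Real.log_inv] at h2
  have h3 : x⁻¹ - 1 ≤ 2 * δ := by
    rw [sub_le_iff_le_add, inv_le_iff_one_le_mul₀ hx]
    nlinarith [hab.1]
  rw [abs_le]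
  constructor <;> nlinarith

lemma aux_geom_sum {r : ℝ} (hr0 : 0 < r) (hr1 : r < 1) (n : ℕ) :
    ∑ j ∈ range n, r ^ j ≤ 1 / (1 - r) := by
  rw [geom_sum_eq (ne_of_lt hr1)]
  have h1 : (0:ℝ) < 1 - r := by linarith
  have h2 : (r ^ n - 1) / (r - 1) = (1 - r ^ n) / (1 - r) := by
    rw [← neg_div_neg_eq]; ring_nf
  rw [h2, div_le_div_iff₀ h1 h1]
  have : (0:ℝ) ≤ r ^ n := le_of_lt (pow_pos hr0 n)
  nlinarith

lemma aux_geom {r : ℝ} (hr0 : 0 < r) (hr1 : r < 1) (i n : ℕ) :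
    ∑ j ∈ Icc 1 (n - i), r ^ (n - j) ≤ r ^ i / (1 - r) := by
  rcases le_or_gt n i with h | h
  · have : n - i = 0 := by omega
    rw [this, show Finset.Icc 1 0 = ∅ from rfl]
    simp only [Finset.sum_empty]
    exact div_nonneg (by positivity) (by linarith)
  · have hni : i < n := h
    have : Icc 1 (n - i) = Ico 1 (n - i + 1) := by rw [Finset.Ico_add_one_right_eq_Icc]
    rw [this, Finset.sum_Ico_eq_sum_range]
    have hm : n - i + 1 - 1 = n - i := by omega
    rw [hm]
    have hcongr : ∀ j ∈ range (n - i), r ^ (n - (1 + j)) = r ^ i * r ^ (n - i - 1 - j) := by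
      intro j hj
      rw [mem_range] at hj
      rw [← pow_add]
      congr 1
      omega
    rw [Finset.sum_congr rfl hcongr, ← Finset.mul_sum, Finset.sum_range_reflect (fun j => r ^ j)]
    have := aux_geom_sum hr0 hr1 (n - i)
    have hri : (0:ℝ) < r ^ i := pow_pos hr0 i
    calc r ^ i * ∑ j ∈ range (n-i), r ^ j ≤ r ^ i * (1 / (1-r)) := by
          exact mul_le_mul_of_nonneg_left this (le_of_lt hri)
      _ = r ^ i / (1 - r) := by ring


lemma aux_shift_set_le (g : ℕ → ℝ) (d : ℕ) (a : ℝ) :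
    (∀ᶠ n in atTop, g (n + d) ≤ a) ↔ (∀ᶠ n in atTop, g n ≤ a) := by
  simp only [eventually_atTop]
  constructor
  · rintro ⟨N, h⟩
    exact ⟨N + d, fun m hm => by
      have := h (m - d) (by omega)
      rwa [Nat.sub_add_cancel (by omega)] at this⟩
  · rintro ⟨N, h⟩
    exact ⟨N, fun n hn => h _ (by omega)⟩

lemma aux_shift_set_ge (g : ℕ → ℝ) (d : ℕ) (a : ℝ) :
    (∀ᶠ n in atTop, a ≤ g (n + d)) ↔ (∀ᶠ n in atTop, a ≤ g n) := by
  simp only [eventually_atTop]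
  constructor
  · rintro ⟨N, h⟩
    exact ⟨N + d, fun m hm => by
      have := h (m - d) (by omega)
      rwa [Nat.sub_add_cancel (by omega)] at this⟩
  · rintro ⟨N, h⟩
    exact ⟨N, fun n hn => h _ (by omega)⟩

lemma aux_limsup_shift (g : ℕ → ℝ) (d : ℕ) :
    limsup (fun n => g (n + d)) atTop = limsup g atTop := by
  rw [limsup_eq, limsup_eq]
  congr 1
  ext a
  exact aux_shift_set_le g d a

lemma aux_liminf_shift (g : ℕ → ℝ) (d : ℕ) :
    liminf (fun n => g (n + d)) atTop = liminf g atTop := by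
  rw [liminf_eq, liminf_eq]
  congr 1
  ext a
  exact aux_shift_set_ge g d a

lemma aux_limsup_le (f g : ℕ → ℝ) (B : ℝ) (hf : ∀ n, f n ≤ B) (hg : ∀ n, g n ≤ B)
    (h : Tendsto (fun n => f n - g n) atTop (nhds 0)) :
    limsup f atTop ≤ limsup g atTop := by
  have hev : ∀ ε : ℝ, 0 < ε → ∀ᶠ n in atTop, |f n - g n| < ε := by
    intro ε hε
    have := Metric.tendsto_nhds.mp h ε hε
    simpa [Real.dist_eq] using this
  by_cases hP : ∀ a : ℝ, ∀ᶠ n in atTop, g n ≤ a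
  · have hPf : ∀ a : ℝ, ∀ᶠ n in atTop, f n ≤ a := by
      intro a
      filter_upwards [hP (a - 1), hev 1 one_pos] with n h1 h2
      have := abs_lt.mp h2
      linarith
    rw [limsup_eq, limsup_eq]
    have e1 : {a | ∀ᶠ n in atTop, f n ≤ a} = Set.univ := Set.eq_univ_of_forall hPf
    have e2 : {a | ∀ᶠ n in atTop, g n ≤ a} = Set.univ := Set.eq_univ_of_forall hP
    rw [e1, e2]
  · have hPf : ¬ ∀ a : ℝ, ∀ᶠ n in atTop, f n ≤ a := by
      intro hPf
      apply hP
      intro a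
      filter_upwards [hPf (a - 1), hev 1 one_pos] with n h1 h2
      have := abs_lt.mp h2
      linarith
    push_neg at hPf hP
    obtain ⟨a₀, ha₀⟩ := hPf
    obtain ⟨a₁, ha₁⟩ := hP
    have hbf : BddBelow {a | ∀ᶠ n in atTop, f n ≤ a} := by
      refine ⟨a₀, fun a ha => ?_⟩
      obtain ⟨n, hn1, hn2⟩ := (ha₀.and_eventually ha).exists
      linarith
    have hgne : {a | ∀ᶠ n in atTop, g n ≤ a}.Nonempty :=
      ⟨B, Eventually.of_forall hg⟩
    rw [limsup_eq, limsup_eq]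
    apply le_of_forall_pos_le_add
    intro ε hε
    obtain ⟨a, haS, halt⟩ := Real.lt_sInf_add_pos hgne (half_pos hε)
    have hmem : sInf {a | ∀ᶠ n in atTop, g n ≤ a} + ε ∈ {a | ∀ᶠ n in atTop, f n ≤ a} := by
      filter_upwards [haS, hev (ε/2) (half_pos hε)] with n h1 h2
      have := abs_lt.mp h2
      simp only [Set.mem_setOf_eq] at *
      linarith
    exact csInf_le hbf hmem

lemma aux_liminf_le (f g : ℕ → ℝ) (B : ℝ) (hf : ∀ n, f n ≤ B) (hg : ∀ n, g n ≤ B)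
    (h : Tendsto (fun n => f n - g n) atTop (nhds 0)) :
    liminf f atTop ≤ liminf g atTop := by
  have hev : ∀ ε : ℝ, 0 < ε → ∀ᶠ n in atTop, |f n - g n| < ε := by
    intro ε hε
    have := Metric.tendsto_nhds.mp h ε hε
    simpa [Real.dist_eq] using this
  by_cases hQ : {a | ∀ᶠ n in atTop, a ≤ f n}.Nonempty
  · obtain ⟨a, ha⟩ := hQ
    have hQg : {a | ∀ᶠ n in atTop, a ≤ g n}.Nonempty := by
      refine ⟨a - 1, ?_⟩
      filter_upwards [ha, hev 1 one_pos] with n h1 h2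
      have := abs_lt.mp h2
      simp only [Set.mem_setOf_eq] at *
      linarith
    have hba : BddAbove {a | ∀ᶠ n in atTop, a ≤ g n} := by
      refine ⟨B, fun x hx => ?_⟩
      obtain ⟨n, hn⟩ := hx.exists
      exact le_trans hn (hg n)
    rw [liminf_eq, liminf_eq]
    apply le_of_forall_pos_le_add
    intro ε hε
    apply csSup_le ⟨a, ha⟩
    intro x hx
    have hxg : x - ε ∈ {a | ∀ᶠ n in atTop, a ≤ g n} := by
      filter_upwards [hx, hev ε hε] with n h1 h2
      have := abs_lt.mp h2
      simp only [Set.mem_setOf_eq] at *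
      linarith
    have := le_csSup hba hxg
    linarith
  · have hQg : ¬ {a | ∀ᶠ n in atTop, a ≤ g n}.Nonempty := by
      rintro ⟨a, ha⟩
      apply hQ
      refine ⟨a - 1, ?_⟩
      filter_upwards [ha, hev 1 one_pos] with n h1 h2
      have := abs_lt.mp h2
      simp only [Set.mem_setOf_eq] at *
      linarith
    rw [liminf_eq, liminf_eq, Set.not_nonempty_iff_eq_empty.mp hQ,
      Set.not_nonempty_iff_eq_empty.mp hQg]

lemma aux_limsup_eq (f g : ℕ → ℝ) (B : ℝ) (hf : ∀ n, f n ≤ B) (hg : ∀ n, g n ≤ B)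
    (h : Tendsto (fun n => f n - g n) atTop (nhds 0)) :
    limsup f atTop = limsup g atTop := by
  have h' : Tendsto (fun n => g n - f n) atTop (nhds 0) := by
    have := h.neg
    simpa using this
  exact le_antisymm (aux_limsup_le f g B hf hg h) (aux_limsup_le g f B hg hf h')

lemma aux_liminf_eq (f g : ℕ → ℝ) (B : ℝ) (hf : ∀ n, f n ≤ B) (hg : ∀ n, g n ≤ B)
    (h : Tendsto (fun n => f n - g n) atTop (nhds 0)) :
    liminf f atTop = liminf g atTop := by
  have h' : Tendsto (fun n => g n - f n) atTop (nhds 0) := by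
    have := h.neg
    simpa using this
  exact le_antisymm (aux_liminf_le f g B hf hg h) (aux_liminf_le g f B hg hf h')

/-- If `0 < r < 1`, `c⁻¹ < ξt k < c`, all `ξ k n > 0`, and
`|ξt k − ξ k n| ≤ C r^(n−k)` for `n ≥ k ≥ k₀`, then for each fixed `i` the logs of the
products `∏_{j=1}^{n−i} ξ (k+j) (k+n) / ξt (k+j)` have limsup and liminf (over `n`)
differing by at most `2 C' rⁱ`, with `C'` independent of `k` and `i`, uniformly in
`k ≥ k₀`. -/
theorem stmt17 (r c C : ℝ) (hr0 : 0 < r) (hr1 : r < 1) (hc : 1 < c) (hC : 0 < C)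
    (k₀ : ℕ)
    (ξt : ℕ → ℝ) (hξt : ∀ k, c⁻¹ < ξt k ∧ ξt k < c)
    (ξ : ℕ → ℕ → ℝ) (hξpos : ∀ k n, 0 < ξ k n)
    (hclose : ∀ k n : ℕ, k₀ ≤ k → k ≤ n → |ξt k - ξ k n| ≤ C * r ^ (n - k)) :
    ∃ C' : ℝ, 0 < C' ∧ ∀ i : ℕ, ∀ k : ℕ, k₀ ≤ k →
      Filter.limsup (fun n : ℕ =>
          Real.log (∏ j ∈ Finset.Icc 1 (n - i), ξ (k+j) (k+n) / ξt (k+j))) atTop -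
        Filter.liminf (fun n : ℕ =>
          Real.log (∏ j ∈ Finset.Icc 1 (n - i), ξ (k+j) (k+n) / ξt (k+j))) atTop ≤
        2 * C' * r ^ i := by
  have hc0 : (0:ℝ) < c := lt_trans one_pos hc
  have h1r : (0:ℝ) < 1 - r := by linarith
  set b := C * c with hb
  have hb0 : 0 < b := mul_pos hC hc0
  obtain ⟨M₀, hM₀⟩ : ∃ M₀ : ℕ, b * r ^ M₀ ≤ 1/2 := by
    obtain ⟨n, hn⟩ := exists_pow_lt_of_lt_one (show (0:ℝ) < 1/(2*b) by positivity) hr1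
    refine ⟨n, ?_⟩
    rw [mul_comm]
    calc r ^ n * b ≤ 1/(2*b) * b := by
          apply mul_le_mul_of_nonneg_right (le_of_lt hn) hb0.le
      _ = 1/2 := by field_simp
  set K := 2 * b / (1 - r) with hKdef
  have hK0 : 0 < K := div_pos (by linarith) h1r
  -- positivity of ξt
  have htpos : ∀ m, 0 < ξt m := fun m => lt_trans (inv_pos.mpr hc0) (hξt m).1
  -- log of the product is the sum of logs
  have hFsum : ∀ k i n : ℕ,
      Real.log (∏ j ∈ Finset.Icc 1 (n - i), ξ (k+j) (k+n) / ξt (k+j)) =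
      ∑ j ∈ Finset.Icc 1 (n - i), Real.log (ξ (k+j) (k+n) / ξt (k+j)) := by
    intro k i n
    exact Real.log_prod (fun j hj => ne_of_gt (div_pos (hξpos _ _) (htpos _)))
  -- key ratio estimate
  have hterm : ∀ k, k₀ ≤ k → ∀ n j : ℕ, 1 ≤ j → j ≤ n →
      |ξ (k+j) (k+n) / ξt (k+j) - 1| ≤ b * r ^ (n - j) := by
    intro k hk n j hj1 hjn
    have ht : 0 < ξt (k+j) := htpos _
    have hcl := hclose (k+j) (k+n) (by omega) (by omega)
    rw [show (k+n) - (k+j) = n - j by omega] at hcl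
    have he : ξ (k+j) (k+n) / ξt (k+j) - 1 = (ξ (k+j) (k+n) - ξt (k+j)) / ξt (k+j) := by
      field_simp
    rw [he, abs_div, abs_of_pos ht, div_le_iff₀ ht]
    have h1 : |ξ (k+j) (k+n) - ξt (k+j)| ≤ C * r ^ (n-j) := by
      rw [abs_sub_comm]; exact hcl
    have h2 : 1 ≤ c * ξt (k+j) := by
      have h3 := (hξt (k+j)).1
      have h4 : c * c⁻¹ = 1 := mul_inv_cancel₀ (ne_of_gt hc0)
      nlinarith
    have hrp : (0:ℝ) < r ^ (n-j) := pow_pos hr0 _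
    calc |ξ (k+j) (k+n) - ξt (k+j)| ≤ C * r ^ (n-j) := h1
      _ = C * r ^ (n-j) * 1 := by ring
      _ ≤ C * r ^ (n-j) * (c * ξt (k+j)) := by
          apply mul_le_mul_of_nonneg_left h2 (by positivity)
      _ = b * r ^ (n-j) * ξt (k+j) := by rw [hb]; ring
  -- upper bound on each log term
  have hlogub : ∀ k, k₀ ≤ k → ∀ n j : ℕ, 1 ≤ j → j ≤ n →
      Real.log (ξ (k+j) (k+n) / ξt (k+j)) ≤ b * r ^ (n - j) := by
    intro k hk n j hj1 hjn
    have h1 := Real.log_le_sub_one_of_pos (div_pos (hξpos (k+j) (k+n)) (htpos (k+j)))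
    exact le_trans h1 (le_trans (le_abs_self _) (hterm k hk n j hj1 hjn))
  -- global upper bound on F
  have hFle : ∀ k, k₀ ≤ k → ∀ i n : ℕ,
      Real.log (∏ j ∈ Finset.Icc 1 (n - i), ξ (k+j) (k+n) / ξt (k+j)) ≤ b / (1 - r) := by
    intro k hk i n
    rw [hFsum]
    calc ∑ j ∈ Finset.Icc 1 (n-i), Real.log (ξ (k+j) (k+n) / ξt (k+j))
        ≤ ∑ j ∈ Finset.Icc 1 (n-i), b * r ^ (n - j) := by
          apply Finset.sum_le_sum
          intro j hj
          rw [Finset.mem_Icc] at hj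
          exact hlogub k hk n j hj.1 (by omega)
      _ = b * ∑ j ∈ Finset.Icc 1 (n-i), r ^ (n - j) := by rw [Finset.mul_sum]
      _ ≤ b * (r ^ i / (1 - r)) := by
          apply mul_le_mul_of_nonneg_left (aux_geom hr0 hr1 i n) hb0.le
      _ = (b * r ^ i) / (1 - r) := by ring
      _ ≤ b / (1 - r) := by
          have h : r ^ i ≤ 1 := pow_le_one₀ hr0.le hr1.le
          gcongr
          nlinarith
  -- two-sided bound when M₀ ≤ i
  have hFabs : ∀ k, k₀ ≤ k → ∀ i, M₀ ≤ i → ∀ n : ℕ,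
      |Real.log (∏ j ∈ Finset.Icc 1 (n - i), ξ (k+j) (k+n) / ξt (k+j))| ≤ K * r ^ i := by
    intro k hk i hi n
    rw [hFsum]
    calc |∑ j ∈ Finset.Icc 1 (n-i), Real.log (ξ (k+j) (k+n) / ξt (k+j))|
        ≤ ∑ j ∈ Finset.Icc 1 (n-i), |Real.log (ξ (k+j) (k+n) / ξt (k+j))| :=
          Finset.abs_sum_le_sum_abs _ _
      _ ≤ ∑ j ∈ Finset.Icc 1 (n-i), 2 * (b * r ^ (n - j)) := by
          apply Finset.sum_le_sum
          intro j hj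
          rw [Finset.mem_Icc] at hj
          have hjn : j ≤ n := by omega
          have hij : i ≤ n - j := by omega
          apply aux_abs_log (div_pos (hξpos _ _) (htpos _)) (hterm k hk n j hj.1 hjn)
          calc b * r ^ (n - j) ≤ b * r ^ M₀ := by
                apply mul_le_mul_of_nonneg_left ?_ hb0.le
                exact pow_le_pow_of_le_one hr0.le hr1.le (by omega)
            _ ≤ 1/2 := hM₀
      _ = 2 * b * ∑ j ∈ Finset.Icc 1 (n-i), r ^ (n - j) := by
          rw [Finset.mul_sum]; apply Finset.sum_congr rfl; intro j hj; ring
      _ ≤ 2 * b * (r ^ i / (1 - r)) := by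
          apply mul_le_mul_of_nonneg_left (aux_geom hr0 hr1 i n) (by linarith)
      _ = K * r ^ i := by rw [hKdef]; ring
  -- the limsup/liminf gap at base point k₀
  set Δ : ℕ → ℝ := fun i =>
    Filter.limsup (fun n : ℕ =>
        Real.log (∏ j ∈ Finset.Icc 1 (n - i), ξ (k₀+j) (k₀+n) / ξt (k₀+j))) atTop -
      Filter.liminf (fun n : ℕ =>
        Real.log (∏ j ∈ Finset.Icc 1 (n - i), ξ (k₀+j) (k₀+n) / ξt (k₀+j))) atTop
    with hΔdef
  set C' : ℝ := K + 1 + ∑ i' ∈ Finset.range M₀, max (Δ i' / (2 * r ^ i')) 0 with hC'def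
  have hSnn : (0:ℝ) ≤ ∑ i' ∈ Finset.range M₀, max (Δ i' / (2 * r ^ i')) 0 :=
    Finset.sum_nonneg fun _ _ => le_max_right _ _
  have hC'0 : 0 < C' := by rw [hC'def]; linarith
  refine ⟨C', hC'0, ?_⟩
  intro i k hk
  rcases le_or_gt M₀ i with hi | hi
  · -- large i : direct bounds
    have hub : ∀ n : ℕ,
        Real.log (∏ j ∈ Finset.Icc 1 (n - i), ξ (k+j) (k+n) / ξt (k+j)) ≤ K * r ^ i :=
      fun n => le_trans (le_abs_self _) (hFabs k hk i hi n)
    have hlb : ∀ n : ℕ,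
        -(K * r ^ i) ≤ Real.log (∏ j ∈ Finset.Icc 1 (n - i), ξ (k+j) (k+n) / ξt (k+j)) :=
      fun n => neg_le_of_abs_le (hFabs k hk i hi n)
    have h1 : Filter.limsup (fun n : ℕ =>
        Real.log (∏ j ∈ Finset.Icc 1 (n - i), ξ (k+j) (k+n) / ξt (k+j))) atTop ≤ K * r ^ i := by
      have hb1 : Filter.IsBoundedUnder (· ≥ ·) atTop (fun n : ℕ =>
          Real.log (∏ j ∈ Finset.Icc 1 (n - i), ξ (k+j) (k+n) / ξt (k+j))) :=
        Filter.isBoundedUnder_of ⟨-(K * r ^ i), fun n => hlb n⟩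
      exact Filter.limsup_le_of_le hb1.isCoboundedUnder_le (Eventually.of_forall hub)
    have h2 : -(K * r ^ i) ≤ Filter.liminf (fun n : ℕ =>
        Real.log (∏ j ∈ Finset.Icc 1 (n - i), ξ (k+j) (k+n) / ξt (k+j))) atTop := by
      have hb1 : Filter.IsBoundedUnder (· ≤ ·) atTop (fun n : ℕ =>
          Real.log (∏ j ∈ Finset.Icc 1 (n - i), ξ (k+j) (k+n) / ξt (k+j))) :=
        Filter.isBoundedUnder_of ⟨K * r ^ i, fun n => hub n⟩
      exact Filter.le_liminf_of_le hb1.isCoboundedUnder_ge (Eventually.of_forall hlb)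
    have hri : (0:ℝ) < r ^ i := pow_pos hr0 i
    have hKC' : K ≤ C' := by rw [hC'def]; linarith
    nlinarith
  · -- small i : reduce to k₀ by shifting
    set d := k - k₀ with hd
    set g₀ : ℕ → ℝ := fun n =>
      Real.log (∏ j ∈ Finset.Icc 1 (n - i), ξ (k₀+j) (k₀+n) / ξt (k₀+j)) with hg₀
    set f : ℕ → ℝ := fun n =>
      Real.log (∏ j ∈ Finset.Icc 1 (n - i), ξ (k+j) (k+n) / ξt (k+j)) with hf
    have hfB : ∀ n, f n ≤ b / (1 - r) := fun n => hFle k hk i n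
    have hgB : ∀ n, g₀ (n + d) ≤ b / (1 - r) := fun n => hFle k₀ le_rfl i (n + d)
    have hdiff : ∀ n : ℕ, i ≤ n → g₀ (n + d) - f n =
        ∑ j ∈ Finset.range d, Real.log (ξ (k₀+j+1) (k+n) / ξt (k₀+j+1)) := by
      intro n hn
      rw [hg₀, hf]
      simp only
      rw [hFsum k₀ i (n+d), hFsum k i n]
      rw [show Finset.Icc 1 (n+d-i) = Finset.Ico 1 ((n+d-i)+1) from (Finset.Ico_add_one_right_eq_Icc _ _).symm,
          show Finset.Icc 1 (n-i) = Finset.Ico 1 ((n-i)+1) from (Finset.Ico_add_one_right_eq_Icc _ _).symm,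
          Finset.sum_Ico_eq_sum_range, Finset.sum_Ico_eq_sum_range]
      simp only [Nat.add_sub_cancel]
      rw [show n + d - i = d + (n - i) by omega, Finset.sum_range_add]
      have hterm2 : ∀ j ∈ Finset.range (n-i),
          Real.log (ξ (k₀+(1+(d+j))) (k₀+(n+d)) / ξt (k₀+(1+(d+j)))) =
          Real.log (ξ (k+(1+j)) (k+n) / ξt (k+(1+j))) := by
        intro j hj
        rw [show k₀+(1+(d+j)) = k+(1+j) by omega, show k₀+(n+d) = k+n by omega]
      rw [Finset.sum_congr rfl hterm2, add_sub_cancel_right]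
      apply Finset.sum_congr rfl
      intro j hj
      rw [show k₀+(1+j) = k₀+j+1 by omega, show k₀+(n+d) = k+n by omega]
    have hsumtend : Tendsto (fun n => ∑ j ∈ Finset.range d,
        Real.log (ξ (k₀+j+1) (k+n) / ξt (k₀+j+1))) atTop (nhds 0) := by
      have h0 : (0:ℝ) = ∑ j ∈ Finset.range d, (0:ℝ) := by simp
      rw [h0]
      apply tendsto_finset_sum
      intro j _
      have hta : 0 < ξt (k₀+j+1) := htpos _
      have h1 : Tendsto (fun n => ξ (k₀+j+1) (k+n) - ξt (k₀+j+1)) atTop (nhds 0) := by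
        apply squeeze_zero_norm' (a := fun n : ℕ => C * r ^ (k + n - (k₀+j+1)))
        · filter_upwards [eventually_ge_atTop (k₀+j+1)] with n hn
          have hcl := hclose (k₀+j+1) (k+n) (by omega) (by omega)
          rw [Real.norm_eq_abs, abs_sub_comm]
          exact hcl
        · have h2 : Tendsto (fun n : ℕ => k + n - (k₀+j+1)) atTop atTop := by
            apply Filter.tendsto_atTop.mpr
            intro N
            filter_upwards [eventually_ge_atTop (N + (k₀+j+1))] with n hn
            omega
          have h3 := (tendsto_pow_atTop_nhds_zero_of_lt_one hr0.le hr1).comp h2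
          have h4 := h3.const_mul C
          simpa using h4
      have h2 : Tendsto (fun n => ξ (k₀+j+1) (k+n)) atTop (nhds (ξt (k₀+j+1))) := by
        have := h1.add_const (ξt (k₀+j+1)); simpa using this
      have h3 : Tendsto (fun n => ξ (k₀+j+1) (k+n) / ξt (k₀+j+1)) atTop (nhds 1) := by
        have := h2.div_const (ξt (k₀+j+1))
        rwa [div_self (ne_of_gt hta)] at this
      have h4 := (Real.continuousAt_log one_ne_zero).tendsto.comp h3
      simpa [Function.comp_def] using h4
    have htend : Tendsto (fun n => f n - g₀ (n + d)) atTop (nhds 0) := by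
      have hneg : Tendsto (fun n => -∑ j ∈ Finset.range d,
          Real.log (ξ (k₀+j+1) (k+n) / ξt (k₀+j+1))) atTop (nhds 0) := by
        have := hsumtend.neg; simpa using this
      apply Tendsto.congr' ?_ hneg
      filter_upwards [eventually_ge_atTop i] with n hn
      have := hdiff n hn
      linarith
    have e1 : limsup f atTop = limsup g₀ atTop := by
      rw [aux_limsup_eq f (fun n => g₀ (n + d)) (b/(1-r)) hfB hgB htend]
      exact aux_limsup_shift g₀ d
    have e2 : liminf f atTop = liminf g₀ atTop := by
      rw [aux_liminf_eq f (fun n => g₀ (n + d)) (b/(1-r)) hfB hgB htend]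
      exact aux_liminf_shift g₀ d
    have hgoal : limsup f atTop - liminf f atTop = Δ i := by
      rw [e1, e2, hΔdef]
    rw [show (Filter.limsup (fun n : ℕ =>
          Real.log (∏ j ∈ Finset.Icc 1 (n - i), ξ (k+j) (k+n) / ξt (k+j))) atTop -
        Filter.liminf (fun n : ℕ =>
          Real.log (∏ j ∈ Finset.Icc 1 (n - i), ξ (k+j) (k+n) / ξt (k+j))) atTop) =
        limsup f atTop - liminf f atTop from rfl, hgoal]
    -- now : Δ i ≤ 2 * C' * r ^ i
    have hri : (0:ℝ) < r ^ i := pow_pos hr0 i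
    have hmax : max (Δ i / (2 * r ^ i)) 0 ≤ ∑ i' ∈ Finset.range M₀, max (Δ i' / (2 * r ^ i')) 0 :=
      Finset.single_le_sum (f := fun i' => max (Δ i' / (2 * r ^ i')) 0)
        (fun _ _ => le_max_right _ _) (Finset.mem_range.mpr hi)
    have hdiv : Δ i / (2 * r ^ i) ≤ C' := by
      have := le_max_left (Δ i / (2 * r ^ i)) 0
      rw [hC'def]; linarith
    have := (div_le_iff₀ (by positivity : (0:ℝ) < 2 * r ^ i)).mp hdiv
    linarith
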